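/- Let f : ℝ → ℝ be right-continuous and of bounded variation on ℝ with total variation T_f, and suppose lim_{x → −∞} f(x) = 0. Then for every s ∈ ℝ, ∫_ℝ |f(x + s) − f(x)| dx ≤ T_f |s|. -/

import Mathlib

open MeasureTheory Filter

private lemma stmt13_aux (f : ℝ → ℝ)
    (hbv : BoundedVariationOn f Set.univ) {s : ℝ} (hs : 0 ≤ s) :
    ∫⁻ x : ℝ, ENNReal.ofReal |f (x + s) - f x| ≤
      ENNReal.ofReal ((eVariationOn f Set.univ).toReal * s) := by
  set T : ℝ := (eVariationOn f Set.univ).toReal with hT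
  set v : ℝ → ℝ := fun x => (eVariationOn f (Set.Iic x)).toReal with hv
  have hne : ∀ t : Set ℝ, eVariationOn f t ≠ ⊤ := fun t =>
    ((eVariationOn.mono f (Set.subset_univ t)).trans_lt
      (lt_top_iff_ne_top.2 hbv)).ne
  have hvmono : Monotone v := fun a b hab =>
    ENNReal.toReal_mono (hne _) (eVariationOn.mono f (Set.Iic_subset_Iic.2 hab))
  have hvT : ∀ x, v x ≤ T := fun x =>
    ENNReal.toReal_mono hbv (eVariationOn.mono f (Set.subset_univ _))
  have hv0 : ∀ x, 0 ≤ v x := fun x => ENNReal.toReal_nonneg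
  -- pointwise bound
  have hpt : ∀ x, |f (x + s) - f x| ≤ v (x + s) - v x := by
    intro x
    have hxs : x ≤ x + s := le_add_of_nonneg_right hs
    have h1 : edist (f x) (f (x + s)) ≤ eVariationOn f (Set.Icc x (x + s)) :=
      eVariationOn.edist_le f ⟨le_refl x, hxs⟩ ⟨hxs, le_refl _⟩
    have h2 : eVariationOn f (Set.Iic x) + eVariationOn f (Set.Icc x (x + s)) ≤
        eVariationOn f (Set.Iic (x + s)) := by
      have := eVariationOn.add_le_union f
        (s := Set.Iic x) (t := Set.Icc x (x + s)) (fun a ha b hb => ha.trans hb.1)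
      rwa [Set.Iic_union_Icc_eq_Iic hxs] at this
    have h2' : v x + (eVariationOn f (Set.Icc x (x + s))).toReal ≤ v (x + s) := by
      have := ENNReal.toReal_mono (hne _) h2
      rwa [ENNReal.toReal_add (hne _) (hne _)] at this
    have h1' : |f (x + s) - f x| ≤ (eVariationOn f (Set.Icc x (x + s))).toReal := by
      have := ENNReal.toReal_mono (hne _) h1
      rwa [edist_dist, ENNReal.toReal_ofReal dist_nonneg, Real.dist_eq,
        abs_sub_comm] at this
    linarith
  have hcompmono : Monotone fun x => v (x + s) := fun a b h =>
    hvmono (by linarith)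
  set g : ℝ → ℝ := fun x => v (x + s) - v x with hg
  have hg0 : ∀ x, 0 ≤ g x := fun x => sub_nonneg.2 (hvmono (le_add_of_nonneg_right hs))
  set G : ℝ → ENNReal := fun x => ENNReal.ofReal (g x) with hG
  have hvmeas : Measurable v := hvmono.measurable
  have hGmeas : Measurable G :=
    ((hvmeas.comp (measurable_id.add_const s)).sub hvmeas).ennreal_ofReal
  have step1 : ∫⁻ x : ℝ, ENNReal.ofReal |f (x + s) - f x| ≤ ∫⁻ x, G x :=
    lintegral_mono fun x => ENNReal.ofReal_le_ofReal (hpt x)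
  refine step1.trans ?_
  -- express as sup over compact intervals
  have hsup : ∀ x, (⨆ n : ℕ, (Set.Icc (-(n : ℝ)) (n : ℝ)).indicator G x) = G x := by
    intro x
    refine le_antisymm (iSup_le fun n => Set.indicator_le_self _ _ x) ?_
    obtain ⟨n, hn⟩ := exists_nat_ge |x|
    refine le_trans ?_ (le_iSup _ n)
    have hx : x ∈ Set.Icc (-(n : ℝ)) (n : ℝ) :=
      ⟨neg_le.1 ((neg_le_abs x).trans hn), (le_abs_self x).trans hn⟩
    rw [Set.indicator_of_mem hx]
  have hmonon : Monotone fun n : ℕ => (Set.Icc (-(n : ℝ)) (n : ℝ)).indicator G := by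
    intro n m hnm
    exact Set.indicator_le_indicator_of_subset
      (Set.Icc_subset_Icc (by exact_mod_cast neg_le_neg (Nat.cast_le.2 hnm))
        (Nat.cast_le.2 hnm)) (fun a => zero_le)
  have : ∫⁻ x, G x = ⨆ n : ℕ, ∫⁻ x in Set.Icc (-(n : ℝ)) (n : ℝ), G x := by
    rw [← lintegral_congr hsup, lintegral_iSup
      (fun n => hGmeas.indicator measurableSet_Icc) hmonon]
    exact iSup_congr fun n => lintegral_indicator measurableSet_Icc G
  rw [this]
  refine iSup_le fun n => ?_
  by_cases hn0 : (-(n : ℝ)) ≤ n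
  swap
  · push_neg at hn0; exact absurd (by positivity : (0:ℝ) ≤ n) (by linarith)
  set a : ℝ := -(n : ℝ)
  set b : ℝ := (n : ℝ)
  have hIg : IntervalIntegrable g volume a b :=
    (hcompmono.intervalIntegrable).sub (hvmono.intervalIntegrable)
  have hint : IntegrableOn g (Set.Icc a b) :=
    (integrableOn_Icc_iff_integrableOn_Ioc).2 hIg.1
  have heq : ∫⁻ x in Set.Icc a b, G x = ENNReal.ofReal (∫ x in Set.Icc a b, g x) :=
    (ofReal_integral_eq_lintegral_ofReal hint
      (Filter.Eventually.of_forall hg0)).symm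
  rw [heq]
  refine ENNReal.ofReal_le_ofReal ?_
  have hIcc : ∫ x in Set.Icc a b, g x = ∫ x in a..b, g x := by
    rw [intervalIntegral.integral_of_le hn0, integral_Icc_eq_integral_Ioc]
  rw [hIcc]
  have hsplit : ∫ x in a..b, g x =
      (∫ x in b..(b + s), v x) - ∫ x in a..(a + s), v x := by
    have e1 : ∫ x in a..b, g x =
        (∫ x in a..b, v (x + s)) - ∫ x in a..b, v x :=
      intervalIntegral.integral_sub hcompmono.intervalIntegrable
        hvmono.intervalIntegrable
    have e2 : ∫ x in a..b, v (x + s) = ∫ x in (a + s)..(b + s), v x :=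
      intervalIntegral.integral_comp_add_right v s
    have h1 : (∫ x in a..(a + s), v x) + ∫ x in (a + s)..(b + s), v x =
        ∫ x in a..(b + s), v x :=
      intervalIntegral.integral_add_adjacent_intervals
        hvmono.intervalIntegrable hvmono.intervalIntegrable
    have h2 : (∫ x in a..b, v x) + ∫ x in b..(b + s), v x =
        ∫ x in a..(b + s), v x :=
      intervalIntegral.integral_add_adjacent_intervals
        hvmono.intervalIntegrable hvmono.intervalIntegrable
    rw [e1, e2]; linarith
  rw [hsplit]
  have hb1 : ∫ x in b..(b + s), v x ≤ T * s := by
    have := intervalIntegral.integral_mono_on (by linarith : b ≤ b + s)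
      hvmono.intervalIntegrable
      (intervalIntegrable_const : IntervalIntegrable (fun _ => T) volume b (b + s))
      (fun x _ => hvT x)
    rw [intervalIntegral.integral_const] at this
    simpa [smul_eq_mul, mul_comm] using this
  have hb2 : 0 ≤ ∫ x in a..(a + s), v x :=
    intervalIntegral.integral_nonneg (by linarith) (fun x _ => hv0 x)
  linarith

/-- If `f : ℝ → ℝ` is right-continuous, of bounded variation on `ℝ` with total
variation `T_f`, and `f(x) → 0` as `x → −∞`, then for every `s ∈ ℝ`,
`∫_ℝ |f(x + s) − f(x)| dx ≤ T_f |s|`. -/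
theorem stmt13 (f : ℝ → ℝ)
    (hbv : BoundedVariationOn f Set.univ)
    (hrc : ∀ x : ℝ, ContinuousWithinAt f (Set.Ici x) x)
    (hlim : Tendsto f atBot (nhds 0)) (s : ℝ) :
    ∫⁻ x : ℝ, ENNReal.ofReal |f (x + s) - f x| ≤
      ENNReal.ofReal ((eVariationOn f Set.univ).toReal * |s|) := by
  rcases le_or_gt 0 s with hs | hs
  · rw [abs_of_nonneg hs]
    exact stmt13_aux f hbv hs
  · rw [abs_of_neg hs]
    have h := stmt13_aux f hbv (neg_nonneg.2 hs.le)
    calc ∫⁻ x : ℝ, ENNReal.ofReal |f (x + s) - f x|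
        = ∫⁻ x : ℝ, ENNReal.ofReal |f ((x + -s) + s) - f (x + -s)| :=
          (lintegral_add_right_eq_self
            (fun x => ENNReal.ofReal |f (x + s) - f x|) (-s)).symm
      _ = ∫⁻ x : ℝ, ENNReal.ofReal |f (x + -s) - f x| := by
          refine lintegral_congr fun x => ?_
          rw [neg_add_cancel_right, abs_sub_comm]
      _ ≤ ENNReal.ofReal ((eVariationOn f Set.univ).toReal * -s) := h
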